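/- Fix l = (l₁,…,l_k) ∈ ℤ_{≥0}^k and m = (m₁,…,mₙ) ∈ ℤ_{≥0}^n with Σl_a = Σm_i, and let ℙ_{kn}[l,m] be the span of monomials in the ξ_{ai} with column degrees m and row degrees l. If for some a ∈ {0,…,k−1} the quantity l̄_a = Σ_{b>a} ( l_b − #{i : m_i ≥ b} ) is negative, then ℙ_{kn}[l,m] = 0. -/

import Mathlib

/-- The monomial `∏_{(a,i) ∈ S} ξ_{ai}` in the exterior algebra `ℙ_{kn}` on generators
`ξ_{ai}`, `a = 1,…,k`, `i = 1,…,n` (product taken in the canonical order of `S`). -/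
noncomputable def monom (k n : ℕ) (S : Finset (Fin k × Fin n)) :
    ExteriorAlgebra ℂ (Fin k × Fin n → ℂ) :=
  (S.toList.map fun p => ExteriorAlgebra.ι ℂ (Pi.single p (1 : ℂ))).prod

/-- The weight subspace `ℙ_{kn}[l,m]`: span of the monomials in the `ξ_{ai}` with column
degrees `m` and row degrees `l`. -/
noncomputable def weightSpace (k n : ℕ) (l : Fin k → ℕ) (m : Fin n → ℕ) :
    Submodule ℂ (ExteriorAlgebra ℂ (Fin k × Fin n → ℂ)) :=
  Submodule.span ℂ {x | ∃ S : Finset (Fin k × Fin n),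
    (∀ a, (S.filter fun p => p.1 = a).card = l a) ∧
    (∀ i, (S.filter fun p => p.2 = i).card = m i) ∧
    x = monom k n S}

/-- Fix `l ∈ ℤ_{≥0}^k` and `m ∈ ℤ_{≥0}^n` with `∑ l_a = ∑ m_i`.  If for
some `a ∈ {0,…,k−1}` the quantity `l̄_a = ∑_{b>a} ( l_b − #{i : m_i ≥ b} )` (with `b`
running over `{a+1,…,k}`, `1`-based) is negative, then `ℙ_{kn}[l,m] = 0`. -/
theorem stmt19 (k n : ℕ) (l : Fin k → ℕ) (m : Fin n → ℕ)
    (hsum : ∑ a, l a = ∑ i, m i) (a₀ : Fin k)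
    (hneg : (∑ b ∈ Finset.univ.filter fun b : Fin k => a₀ ≤ b,
        ((l b : ℤ) -
          ((Finset.univ.filter fun i : Fin n => (b : ℕ) + 1 ≤ m i).card : ℤ))) < 0) :
    weightSpace k n l m = ⊥ := by
  rw [weightSpace, Submodule.span_eq_bot]
  rintro x ⟨S, hl, hm, rfl⟩
  exfalso
  set F : Finset (Fin k) := Finset.univ.filter (fun b : Fin k => a₀ ≤ b) with hF
  -- Step 1: ∑_{b ∈ F} l b = card of the part of S with row ≥ a₀
  have h1 : ∑ b ∈ F, l b = (S.filter fun p => a₀ ≤ p.1).card := by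
    rw [Finset.card_eq_sum_card_fiberwise
      (s := S.filter fun p => a₀ ≤ p.1) (t := F) (f := fun p => p.1)
      (by intro p hp
          exact Finset.mem_filter.2 ⟨Finset.mem_univ _, (Finset.mem_filter.1 hp).2⟩)]
    refine Finset.sum_congr rfl fun b hb => ?_
    simp only [hF, Finset.mem_filter, Finset.mem_univ, true_and] at hb
    rw [← hl b, Finset.filter_filter]
    congr 1
    apply Finset.filter_congr
    intro p _
    constructor
    · intro h
      first
        | exact h.2
        | exact ⟨le_of_le_of_eq hb h.symm, h⟩
    · intro h
      first
        | exact h.2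
        | exact ⟨le_of_le_of_eq hb h.symm, h⟩
  -- Step 2: that part decomposes by columns
  have h2 : (S.filter fun p => a₀ ≤ p.1).card
      = ∑ i : Fin n, ((S.filter fun p => a₀ ≤ p.1).filter fun p => p.2 = i).card :=
    Finset.card_eq_sum_card_fiberwise
      (s := S.filter fun p => a₀ ≤ p.1) (t := Finset.univ) (f := fun p => p.2)
      (fun p _ => Finset.mem_univ _)
  -- Step 3: swap the double sum on the other side
  have hswap : ∑ b ∈ F, (Finset.univ.filter fun i : Fin n => (b : ℕ) + 1 ≤ m i).card
      = ∑ i : Fin n, (F.filter fun b : Fin k => (b : ℕ) + 1 ≤ m i).card := by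
    simp_rw [Finset.card_filter]
    rw [Finset.sum_comm]
  -- Step 4: per-column inequality
  have h4 : ∀ i : Fin n, (F.filter fun b : Fin k => (b : ℕ) + 1 ≤ m i).card
      ≤ ((S.filter fun p => a₀ ≤ p.1).filter fun p => p.2 = i).card := by
    intro i
    have ha : (F.filter fun b : Fin k => (b : ℕ) + 1 ≤ m i).card ≤ m i - (a₀ : ℕ) := by
      calc (F.filter fun b : Fin k => (b : ℕ) + 1 ≤ m i).card
          ≤ (Finset.Ico (a₀ : ℕ) (m i)).card := by
            refine Finset.card_le_card_of_injOn
              (s := F.filter fun b : Fin k => (b : ℕ) + 1 ≤ m i)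
              (t := Finset.Ico (a₀ : ℕ) (m i)) (fun b => (b : ℕ)) ?_ ?_
            · intro b hb
              simp only [Finset.mem_coe, hF, Finset.mem_filter, Finset.mem_univ, true_and,
                Fin.le_def] at hb
              simp only [Finset.mem_coe, Finset.mem_Ico]
              omega
            · intro b _ c _ h
              exact Fin.val_injective h
        _ = m i - (a₀ : ℕ) := Nat.card_Ico _ _
    have hsplit : ((S.filter fun p => p.2 = i).filter fun p => a₀ ≤ p.1).card
        + ((S.filter fun p => p.2 = i).filter fun p => ¬ a₀ ≤ p.1).card = m i := by
      rw [Finset.card_filter_add_card_filter_not, hm i]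
    have hBle : ((S.filter fun p => p.2 = i).filter fun p => ¬ a₀ ≤ p.1).card
        ≤ (a₀ : ℕ) := by
      calc ((S.filter fun p => p.2 = i).filter fun p => ¬ a₀ ≤ p.1).card
          ≤ (Finset.range (a₀ : ℕ)).card := by
            refine Finset.card_le_card_of_injOn
              (s := (S.filter fun p => p.2 = i).filter fun p => ¬ a₀ ≤ p.1)
              (t := Finset.range (a₀ : ℕ)) (fun p => ((p.1 : Fin k) : ℕ)) ?_ ?_
            · intro p hp
              simp only [Finset.mem_coe, Finset.mem_filter, Fin.le_def, not_le] at hp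
              simp only [Finset.mem_coe, Finset.mem_range]
              omega
            · intro p hp q hq h
              simp only [Finset.mem_coe, Finset.mem_filter] at hp hq
              exact Prod.ext (Fin.val_injective h) (hp.1.2.trans hq.1.2.symm)
        _ = (a₀ : ℕ) := Finset.card_range _
    have hcomm : ((S.filter fun p => a₀ ≤ p.1).filter fun p => p.2 = i)
        = ((S.filter fun p => p.2 = i).filter fun p => a₀ ≤ p.1) := by
      rw [Finset.filter_filter, Finset.filter_filter]
      apply Finset.filter_congr
      intro p _
      constructor
      · exact fun h => ⟨h.2, h.1⟩
      · exact fun h => ⟨h.2, h.1⟩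
    rw [hcomm]
    omega
  -- combine
  have key : ∑ b ∈ F, (Finset.univ.filter fun i : Fin n => (b : ℕ) + 1 ≤ m i).card
      ≤ ∑ b ∈ F, l b := by
    rw [hswap, h1, h2]
    exact Finset.sum_le_sum fun i _ => h4 i
  have hge : (0 : ℤ) ≤ ∑ b ∈ F, ((l b : ℤ)
      - ((Finset.univ.filter fun i : Fin n => (b : ℕ) + 1 ≤ m i).card : ℤ)) := by
    rw [Finset.sum_sub_distrib, sub_nonneg]
    exact_mod_cast key
  omega
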